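/- For m ≥ 2 and n with base m representation (α_j,...,α_0), the map φ sending an m-ary partition λ = (λ_ℓ,...,λ_0) of n (with λ_k set to 0 for ℓ < k ≤ j) to the sequence (β_j,...,β_1), where β_i = Σ_{k=i}^{j} m^{k-i}·(α_k − λ_k), produces a sequence with 0 ≤ β_j ≤ α_j and 0 ≤ β_t ≤ α_t + m·β_{t+1} for 1 ≤ t ≤ j−1; i.e., φ is well-defined from B_m(n) to S_m(n). -/

import Mathlib

theorem phi_well_defined (m n j : ℕ) (α l : ℕ → ℕ) (hm : 2 ≤ m) (hj : 0 < α j) (hd : ∀ i, i ≤ j → α i < m)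
    (hn : n = ∑ i ∈ Finset.range (j + 1), α i * m ^ i)
    (hl0 : ∀ k, j < k → l k = 0)
    (hls : ∑ i ∈ Finset.range (j + 1), l i * m ^ i = n)
    (β : ℕ → ℤ)
    (hβ : ∀ i, β i = ∑ k ∈ Finset.Icc i j, (m : ℤ) ^ (k - i) * ((α k : ℤ) - (l k : ℤ))) :
    (0 ≤ β j ∧ β j ≤ (α j : ℤ)) ∧
    ∀ t, 1 ≤ t → t < j → 0 ≤ β t ∧ β t ≤ (α t : ℤ) + (m : ℤ) * β (t + 1) := by
  have hm1 : (1:ℤ) ≤ (m:ℤ) := by exact_mod_cast Nat.one_le_of_lt hm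
  -- total sum is zero
  have htot : ∑ k ∈ Finset.range (j + 1), ((α k : ℤ) - (l k : ℤ)) * (m:ℤ) ^ k = 0 := by
    have h1 : ((∑ i ∈ Finset.range (j + 1), α i * m ^ i : ℕ) : ℤ)
        = ((∑ i ∈ Finset.range (j + 1), l i * m ^ i : ℕ) : ℤ) := by
      rw [hls, ← hn]
    push_cast at h1
    have : ∑ k ∈ Finset.range (j + 1), ((α k : ℤ) - (l k : ℤ)) * (m:ℤ) ^ k
        = (∑ i ∈ Finset.range (j + 1), (α i : ℤ) * (m:ℤ) ^ i)
          - ∑ i ∈ Finset.range (j + 1), (l i : ℤ) * (m:ℤ) ^ i := by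
      rw [← Finset.sum_sub_distrib]; apply Finset.sum_congr rfl; intro k _; ring
    rw [this, h1, sub_self]
  -- key identity
  have key : ∀ t, t ≤ j → (m:ℤ) ^ t * β t
      = ∑ k ∈ Finset.range t, ((l k : ℤ) - (α k : ℤ)) * (m:ℤ) ^ k := by
    intro t ht
    rw [hβ, Finset.mul_sum]
    have h2 : ∑ k ∈ Finset.Icc t j, (m:ℤ) ^ t * ((m:ℤ) ^ (k - t) * ((α k : ℤ) - (l k : ℤ)))
        = ∑ k ∈ Finset.Icc t j, ((α k : ℤ) - (l k : ℤ)) * (m:ℤ) ^ k := by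
      apply Finset.sum_congr rfl
      intro k hk
      have hkt : t ≤ k := (Finset.mem_Icc.mp hk).1
      rw [← mul_assoc, ← pow_add, Nat.add_sub_cancel' hkt]; ring
    rw [h2]
    have hsplit : (∑ k ∈ Finset.range t, ((α k : ℤ) - (l k : ℤ)) * (m:ℤ) ^ k)
        + ∑ k ∈ Finset.Icc t j, ((α k : ℤ) - (l k : ℤ)) * (m:ℤ) ^ k
        = ∑ k ∈ Finset.range (j + 1), ((α k : ℤ) - (l k : ℤ)) * (m:ℤ) ^ k := by
      rw [Finset.range_eq_Ico, Finset.range_eq_Ico, ← Finset.Ico_add_one_right_eq_Icc]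
      exact Finset.sum_Ico_consecutive (fun k => ((α k : ℤ) - (l k : ℤ)) * (m:ℤ) ^ k) (Nat.zero_le t) (Nat.le_succ_of_le ht)
    have h8 := hsplit.trans htot
    have h9 : ∑ k ∈ Finset.range t, ((l k : ℤ) - (α k : ℤ)) * (m:ℤ) ^ k
        = -(∑ k ∈ Finset.range t, ((α k : ℤ) - (l k : ℤ)) * (m:ℤ) ^ k) := by
      rw [← Finset.sum_neg_distrib]; apply Finset.sum_congr rfl; intro k _; ring
    rw [h9]; linarith
  -- bound on partial α sum
  have hbound : ∀ t, t ≤ j → ∑ k ∈ Finset.range t, (α k : ℤ) * (m:ℤ) ^ k ≤ (m:ℤ) ^ t - 1 := by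
    intro t ht
    have h3 : ∑ k ∈ Finset.range t, (α k : ℤ) * (m:ℤ) ^ k
        ≤ ∑ k ∈ Finset.range t, ((m:ℤ) - 1) * (m:ℤ) ^ k := by
      apply Finset.sum_le_sum
      intro k hk
      have hk' : α k < m := hd k (le_trans (le_of_lt (Finset.mem_range.mp hk)) ht)
      have hk2 : (α k : ℤ) < (m:ℤ) := by exact_mod_cast hk'
      have hmp : (0:ℤ) ≤ (m:ℤ) ^ k := pow_nonneg (by linarith) k
      nlinarith
    have h4 : ∑ k ∈ Finset.range t, ((m:ℤ) - 1) * (m:ℤ) ^ k = (m:ℤ) ^ t - 1 := by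
      have : ∑ k ∈ Finset.range t, ((m:ℤ) - 1) * (m:ℤ) ^ k
          = (∑ k ∈ Finset.range t, (m:ℤ) ^ k) * ((m:ℤ) - 1) := by
        rw [Finset.sum_mul]; apply Finset.sum_congr rfl; intro k _; ring
      rw [this, geom_sum_mul]
    linarith
  -- nonnegativity of β t for t ≤ j
  have hnonneg : ∀ t, t ≤ j → 0 ≤ β t := by
    intro t ht
    have hk := key t ht
    have h5 : -((m:ℤ) ^ t - 1) ≤ ∑ k ∈ Finset.range t, ((l k : ℤ) - (α k : ℤ)) * (m:ℤ) ^ k := by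
      have h6 : ∑ k ∈ Finset.range t, (-(α k : ℤ)) * (m:ℤ) ^ k
          ≤ ∑ k ∈ Finset.range t, ((l k : ℤ) - (α k : ℤ)) * (m:ℤ) ^ k := by
        apply Finset.sum_le_sum
        intro k _
        have hmp : (0:ℤ) ≤ (m:ℤ) ^ k := pow_nonneg (by linarith) k
        have : (0:ℤ) ≤ (l k : ℤ) := Int.natCast_nonneg _
        nlinarith
      have h7 : ∑ k ∈ Finset.range t, (-(α k : ℤ)) * (m:ℤ) ^ k
          = -(∑ k ∈ Finset.range t, (α k : ℤ) * (m:ℤ) ^ k) := by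
        rw [← Finset.sum_neg_distrib]; apply Finset.sum_congr rfl; intro k _; ring
      have := hbound t ht
      linarith
    have hmt : (1:ℤ) ≤ (m:ℤ) ^ t := by
      have h := pow_le_pow_left₀ (by norm_num : (0:ℤ) ≤ 1) hm1 t
      simpa using h
    nlinarith [hk]
  -- recurrence
  have hrec : ∀ t, t < j → β t = ((α t : ℤ) - (l t : ℤ)) + (m:ℤ) * β (t + 1) := by
    intro t ht
    rw [hβ t, hβ (t + 1)]
    have hins : Finset.Icc t j = insert t (Finset.Icc (t + 1) j) := by
      ext x
      simp only [Finset.mem_Icc, Finset.mem_insert]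
      omega
    rw [hins, Finset.sum_insert (by simp)]
    simp only [Nat.sub_self, pow_zero, one_mul]
    congr 1
    rw [Finset.mul_sum]
    apply Finset.sum_congr rfl
    intro k hk
    have hkt : t + 1 ≤ k := (Finset.mem_Icc.mp hk).1
    have : k - t = (k - (t + 1)) + 1 := by omega
    rw [this, pow_succ]
    ring
  refine ⟨⟨hnonneg j le_rfl, ?_⟩, ?_⟩
  · rw [hβ j, Finset.Icc_self, Finset.sum_singleton, Nat.sub_self, pow_zero, one_mul]
    have : (0:ℤ) ≤ (l j : ℤ) := Int.natCast_nonneg _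
    linarith
  · intro t ht1 htj
    refine ⟨hnonneg t (le_of_lt htj), ?_⟩
    rw [hrec t htj]
    have : (0:ℤ) ≤ (l t : ℤ) := Int.natCast_nonneg _
    linarith
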